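/- Under hypotheses (T1), (T2) and R(x,y)^⊤ = R(y,x), for all f, g ∈ C(I,ℂ) and all x, z ∈ X one has ((f∘R) ∘ (g∘R))(x,z) = (f*g)(R(x,z)), where f*g(i) := ∫_I (∫_I f d(δ_i * δ_{i'})) · g(i'^⊤) dμ_I(i'); in particular, since f*g ∈ C(I,ℂ), the algebra 𝔄_R = {f ∘ R : f ∈ C(I,ℂ)} is closed under the matrix product. -/
import Mathlib


open MeasureTheory Topology Filter

noncomputable section

variable {X : Type*} {I : Type*}

/-- The matrix product `(A ∘ B)(x,z) = ∫ A(x,y) B(y,z) dμ(y)`. -/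
def matProd [MeasurableSpace X] (μ : Measure X) (A B : X × X → ℂ) :
    X × X → ℂ :=
  fun p => ∫ y, A (p.1, y) * B (y, p.2) ∂μ

theorem stmt17 [TopologicalSpace X] [CompactSpace X] [T2Space X] [Nonempty X]
    [MeasurableSpace X] [BorelSpace X]
    (μ : Measure X) [IsFiniteMeasure μ] [μ.Regular] [μ.IsOpenPosMeasure]
    [TopologicalSpace I] [CompactSpace I] [T2Space I] [Nonempty I]
    [MeasurableSpace I] [BorelSpace I]
    (R : X × X → I) (hR : Topology.IsQuotientMap R)
    (κ : X × I → Measure X) (hκ : ∀ p : X × I, IsProbabilityMeasure (κ p))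
    (T : I → I) (hTcont : Continuous T) (hTinv : ∀ i : I, T (T i) = i)
    (hTR : ∀ x y : X, T (R (x, y)) = R (y, x))
    (conv : I → I → Measure I) (hconv : ∀ i i' : I, IsProbabilityMeasure (conv i i'))
    (μI : Measure I) [IsFiniteMeasure μI] [μI.Regular]
    (hconvCont : ∀ f g : C(I, ℂ),
      Continuous fun i : I => ∫ i', (∫ j, f j ∂(conv i i')) * g (T i') ∂μI)
    (hT1 : ∀ (i : I) (x z : X) (f : C(I, ℂ)),
      (∫ j, f j ∂(conv (R (x, z)) i)) = ∫ y, f (R (x, y)) ∂(κ (z, i)))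
    (hT2 : ∀ (x : X) (f : C(I, ℂ)) (φ : C(X, ℂ)),
      (∫ i, f i * ∫ y, φ y ∂(κ (x, i)) ∂μI) = ∫ y, f (R (x, y)) * φ y ∂μ) :
    (∀ (f g : C(I, ℂ)) (x z : X),
      matProd μ (fun q => f (R q)) (fun q => g (R q)) (x, z) =
        ∫ i', (∫ j, f j ∂(conv (R (x, z)) i')) * g (T i') ∂μI) ∧
    ∀ f g : C(I, ℂ), ∃ h : C(I, ℂ), ∀ p : X × X,
      matProd μ (fun q => f (R q)) (fun q => g (R q)) p = h (R p) := by
  have main : ∀ (f g : C(I, ℂ)) (x z : X),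
      matProd μ (fun q => f (R q)) (fun q => g (R q)) (x, z) =
        ∫ i', (∫ j, f j ∂(conv (R (x, z)) i')) * g (T i') ∂μI := by
    intro f g x z
    have hcx : Continuous fun y : X => R (x, y) :=
      hR.continuous.comp (Continuous.prodMk_right x)
    let φ : C(X, ℂ) := ⟨fun y => f (R (x, y)), f.continuous.comp hcx⟩
    let F : C(I, ℂ) := ⟨fun i => g (T i), g.continuous.comp hTcont⟩
    have h2 := hT2 z F φ
    simp only [ContinuousMap.coe_mk, φ, F] at h2
    calc matProd μ (fun q => f (R q)) (fun q => g (R q)) (x, z)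
        = ∫ y, f (R (x, y)) * g (R (y, z)) ∂μ := rfl
      _ = ∫ y, g (T (R (z, y))) * f (R (x, y)) ∂μ := by
          refine integral_congr_ae (Filter.Eventually.of_forall fun y => ?_)
          dsimp only; rw [hTR z y, mul_comm]
      _ = ∫ i, g (T i) * ∫ y, f (R (x, y)) ∂(κ (z, i)) ∂μI := h2.symm
      _ = ∫ i', (∫ j, f j ∂(conv (R (x, z)) i')) * g (T i') ∂μI := by
          refine integral_congr_ae (Filter.Eventually.of_forall fun i => ?_)
          dsimp only; rw [hT1 i x z f, mul_comm]
  exact ⟨main, fun f g =>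
    ⟨⟨fun i => ∫ i', (∫ j, f j ∂(conv i i')) * g (T i') ∂μI, hconvCont f g⟩,
      fun p => main f g p.1 p.2⟩⟩
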